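/- Let 0 < c ≤ C. Suppose that for each i ∈ {1,…,d} the N-function φ_i is C² on (0,∞), satisfies the Δ₂-condition with constant D, is uniformly convex with constants c, C, and the pair (φ_i, A_i) satisfies the orthotropic growth conditions with constants c, C. Define ψ_i(t) = ∫₀ᵗ √(s φ_i'(s)) ds, V_i(s) = ψ_i'(|s|) s/|s| for s ≠ 0 and V_i(0) = 0, and the coordinatewise vector fields A(ξ)_i = A_i(ξ_i), V(ξ)_i = V_i(ξ_i) on ℝ^d. Then there exist constants 0 < c' ≤ C', depending only on c, C, D (and not on ξ, η), such that for all ξ, η ∈ ℝ^d the following four quantities are pairwise comparable with constants c', C': (A(ξ) − A(η))·(ξ − η); |V(ξ) − V(η)|²; Σ_{i=1}^d (φ_i)_{|ξ_i|}(|ξ_i − η_i|); Σ_{i=1}^d φ_i''(|ξ_i| + |η_i|)|ξ_i − η_i|² (each summand interpreted as 0 when ξ_i = η_i). -/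

import Mathlib

open MeasureTheory

/-- An N-function `Φ` with derivative `Φ'`: differentiable on `[0,∞)` with
`Φ(0) = 0`, `Φ(t) = ∫₀ᵗ Φ'(s) ds`, `Φ'` nondecreasing, right-continuous,
`Φ'(0) = 0` and `Φ'(t) > 0` for `t > 0`. -/
structure IsNFunction (Φ Φ' : ℝ → ℝ) : Prop where
  map_zero : Φ 0 = 0
  eq_integral : ∀ t : ℝ, 0 ≤ t → Φ t = ∫ s in (0:ℝ)..t, Φ' s
  deriv_zero : Φ' 0 = 0
  deriv_pos : ∀ t : ℝ, 0 < t → 0 < Φ' t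
  deriv_mono : MonotoneOn Φ' (Set.Ici 0)
  deriv_rightCont : ∀ t : ℝ, 0 ≤ t → ContinuousWithinAt Φ' (Set.Ici t) t

/-- The Δ₂-condition with constant `D`. -/
def Delta2 (Φ : ℝ → ℝ) (D : ℝ) : Prop := ∀ t : ℝ, 0 < t → Φ (2 * t) ≤ D * Φ t

/-- Uniform convexity with constants `c ≤ C`: `c Φ'(t) ≤ t Φ''(t) ≤ C Φ'(t)` for `t > 0`. -/
def UniformlyConvex (Φ' Φ'' : ℝ → ℝ) (c C : ℝ) : Prop :=
  ∀ t : ℝ, 0 < t → c * Φ' t ≤ t * Φ'' t ∧ t * Φ'' t ≤ C * Φ' t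

/-- The orthotropic growth conditions for the pair `(φ, A)` with constants `c ≤ C`
(all terms vanish when `ξ = η`). -/
def OrthotropicGrowth (Φ'' A : ℝ → ℝ) (c C : ℝ) : Prop :=
  ∀ ξ η : ℝ, c * (Φ'' (|ξ| + |η|) * |ξ - η| ^ 2) ≤ (A ξ - A η) * (ξ - η) ∧
    |A ξ - A η| ≤ C * (Φ'' (|ξ| + |η|) * |ξ - η|)

/-- Derivative of the shifted N-function: `Φ_a'(t) = (t/(a+t)) Φ'(a+t)`. -/
noncomputable def shiftDeriv (Φ' : ℝ → ℝ) (a t : ℝ) : ℝ := t / (a + t) * Φ' (a + t)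

/-- The shifted N-function `Φ_a(t) = ∫₀ᵗ (s/(a+s)) Φ'(a+s) ds`. -/
noncomputable def shiftN (Φ' : ℝ → ℝ) (a t : ℝ) : ℝ := ∫ s in (0:ℝ)..t, shiftDeriv Φ' a s

/-- `ψ'(t) = √(t Φ'(t))`. -/
noncomputable def psiDeriv (Φ' : ℝ → ℝ) (t : ℝ) : ℝ := Real.sqrt (t * Φ' t)

/-- `ψ(t) = ∫₀ᵗ √(s Φ'(s)) ds`. -/
noncomputable def psiOf (Φ' : ℝ → ℝ) (t : ℝ) : ℝ := ∫ s in (0:ℝ)..t, psiDeriv Φ' s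

/-- `V(s) = ψ'(|s|) s/|s|` for `s ≠ 0`, `V(0) = 0`. -/
noncomputable def Vof (Φ' : ℝ → ℝ) (s : ℝ) : ℝ :=
  if s = 0 then 0 else psiDeriv Φ' |s| * s / |s|

/-- The four quantities of the equivalence: `(A(ξ)−A(η))·(ξ−η)`, `|V(ξ)−V(η)|²`,
`Σᵢ (φᵢ)_{|ξᵢ|}(|ξᵢ−ηᵢ|)` and `Σᵢ φᵢ''(|ξᵢ|+|ηᵢ|)|ξᵢ−ηᵢ|²`. -/
noncomputable def quantQ (d : ℕ) (φ' φ'' A : Fin d → ℝ → ℝ) (ξ η : Fin d → ℝ) : Fin 4 → ℝ :=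
  ![∑ i, (A i (ξ i) - A i (η i)) * (ξ i - η i),
    ∑ i, (Vof (φ' i) (ξ i) - Vof (φ' i) (η i)) ^ 2,
    ∑ i, shiftN (φ' i) |ξ i| |ξ i - η i|,
    ∑ i, φ'' i (|ξ i| + |η i|) * (ξ i - η i) ^ 2]

namespace Stmt0Aux

/-- If `p f ≤ t f'` then `f t t^(-p)` is nondecreasing on `(0,∞)`. -/
lemma powmul_mono {f f' : ℝ → ℝ} {p : ℝ}
    (hd : ∀ t : ℝ, 0 < t → HasDerivAt f (f' t) t)
    (h : ∀ t : ℝ, 0 < t → p * f t ≤ t * f' t) :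
    MonotoneOn (fun t => f t * t ^ (-p)) (Set.Ioi (0:ℝ)) := by
  have hderiv : ∀ x ∈ interior (Set.Ioi (0:ℝ)),
      HasDerivWithinAt (fun t => f t * t ^ (-p))
        (f' x * x ^ (-p) + f x * (-p * x ^ (-p - 1))) (interior (Set.Ioi (0:ℝ))) x := by
    intro x hx
    rw [isOpen_Ioi.interior_eq] at hx
    exact ((hd x hx).mul (Real.hasDerivAt_rpow_const (Or.inl hx.ne'))).hasDerivWithinAt
  refine monotoneOn_of_hasDerivWithinAt_nonneg (convex_Ioi 0) ?_ hderiv ?_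
  · intro x hx
    exact ((hd x hx).continuousAt.continuousWithinAt).mul
      ((Real.continuousAt_rpow_const x (-p) (Or.inl hx.ne')).continuousWithinAt)
  · intro x hx
    rw [isOpen_Ioi.interior_eq] at hx
    have hx0 : (0:ℝ) < x := hx
    have hx1 : x ^ (-p) = x * x ^ (-p - 1) := by
      have h2 := Real.rpow_add hx0 1 (-p - 1)
      rw [Real.rpow_one] at h2
      rw [← h2]; congr 1; ring
    calc (0:ℝ) ≤ (x * f' x - p * f x) * x ^ (-p - 1) :=
          mul_nonneg (by linarith [h x hx0]) (Real.rpow_nonneg hx0.le _)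
      _ = f' x * x ^ (-p) + f x * (-p * x ^ (-p - 1)) := by rw [hx1]; ring

lemma powmul_anti {f f' : ℝ → ℝ} {q : ℝ}
    (hd : ∀ t : ℝ, 0 < t → HasDerivAt f (f' t) t)
    (h : ∀ t : ℝ, 0 < t → t * f' t ≤ q * f t) :
    AntitoneOn (fun t => f t * t ^ (-q)) (Set.Ioi (0:ℝ)) := by
  have hderiv : ∀ x ∈ interior (Set.Ioi (0:ℝ)),
      HasDerivWithinAt (fun t => f t * t ^ (-q))
        (f' x * x ^ (-q) + f x * (-q * x ^ (-q - 1))) (interior (Set.Ioi (0:ℝ))) x := by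
    intro x hx
    rw [isOpen_Ioi.interior_eq] at hx
    exact ((hd x hx).mul (Real.hasDerivAt_rpow_const (Or.inl hx.ne'))).hasDerivWithinAt
  refine antitoneOn_of_hasDerivWithinAt_nonpos (convex_Ioi 0) ?_ hderiv ?_
  · intro x hx
    exact ((hd x hx).continuousAt.continuousWithinAt).mul
      ((Real.continuousAt_rpow_const x (-q) (Or.inl hx.ne')).continuousWithinAt)
  · intro x hx
    rw [isOpen_Ioi.interior_eq] at hx
    have hx0 : (0:ℝ) < x := hx
    have hx1 : x ^ (-q) = x * x ^ (-q - 1) := by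
      have h2 := Real.rpow_add hx0 1 (-q - 1)
      rw [Real.rpow_one] at h2
      rw [← h2]; congr 1; ring
    calc f' x * x ^ (-q) + f x * (-q * x ^ (-q - 1))
        = (x * f' x - q * f x) * x ^ (-q - 1) := by rw [hx1]; ring
      _ ≤ 0 := mul_nonpos_of_nonpos_of_nonneg (by linarith [h x hx0]) (Real.rpow_nonneg hx0.le _)

section Ratio
variable {φ' φ'' : ℝ → ℝ} {c C : ℝ}

lemma phi'_nonneg (hN : IsNFunction φ φ') {t : ℝ} (ht : 0 ≤ t) : 0 ≤ φ' t := by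
  rcases eq_or_lt_of_le ht with rfl | h
  · exact hN.deriv_zero.ge
  · exact (hN.deriv_pos t h).le

lemma phi'_mono (hN : IsNFunction φ φ') {s t : ℝ} (hs : 0 ≤ s) (hst : s ≤ t) :
    φ' s ≤ φ' t :=
  hN.deriv_mono (Set.mem_Ici.2 hs) (Set.mem_Ici.2 (hs.trans hst)) hst

/-- `φ'(t) ≤ (t/s)^C φ'(s)` for `0 < s ≤ t`. -/
lemma phi'_ratio_le (hN : IsNFunction φ φ')
    (hd2 : ∀ t : ℝ, 0 < t → HasDerivAt φ' (φ'' t) t)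
    (huc : UniformlyConvex φ' φ'' c C) {s t : ℝ} (hs : 0 < s) (hst : s ≤ t) :
    φ' t ≤ (t / s) ^ C * φ' s := by
  have ht : (0:ℝ) < t := hs.trans_le hst
  have h := powmul_anti hd2 (fun t ht => (huc t ht).2) (Set.mem_Ioi.2 hs)
    (Set.mem_Ioi.2 ht) hst
  simp only at h
  have htC : (0:ℝ) < t ^ C := Real.rpow_pos_of_pos ht _
  have hsC : (0:ℝ) < s ^ C := Real.rpow_pos_of_pos hs _
  have e1 : φ' t = φ' t * t ^ (-C) * t ^ C := by
    rw [mul_assoc, ← Real.rpow_add ht, neg_add_cancel, Real.rpow_zero, mul_one]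
  rw [e1]
  calc φ' t * t ^ (-C) * t ^ C ≤ φ' s * s ^ (-C) * t ^ C :=
        mul_le_mul_of_nonneg_right h htC.le
    _ = (t / s) ^ C * φ' s := by
        rw [Real.div_rpow ht.le hs.le, Real.rpow_neg hs.le]
        field_simp

/-- `(t/s)^c φ'(s) ≤ φ'(t)` for `0 < s ≤ t`. -/
lemma phi'_ratio_ge (hN : IsNFunction φ φ')
    (hd2 : ∀ t : ℝ, 0 < t → HasDerivAt φ' (φ'' t) t)
    (huc : UniformlyConvex φ' φ'' c C) {s t : ℝ} (hs : 0 < s) (hst : s ≤ t) :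
    (t / s) ^ c * φ' s ≤ φ' t := by
  have ht : (0:ℝ) < t := hs.trans_le hst
  have h := powmul_mono hd2 (fun t ht => (huc t ht).1) (Set.mem_Ioi.2 hs)
    (Set.mem_Ioi.2 ht) hst
  simp only at h
  have htc : (0:ℝ) < t ^ c := Real.rpow_pos_of_pos ht _
  have e1 : φ' t = φ' t * t ^ (-c) * t ^ c := by
    rw [mul_assoc, ← Real.rpow_add ht, neg_add_cancel, Real.rpow_zero, mul_one]
  rw [e1]
  have := mul_le_mul_of_nonneg_right h htc.le
  calc (t / s) ^ c * φ' s = φ' s * s ^ (-c) * t ^ c := by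
        rw [Real.div_rpow ht.le hs.le, Real.rpow_neg hs.le]
        field_simp
    _ ≤ φ' t * t ^ (-c) * t ^ c := this

/-- doubling: `0 < u`, `0 ≤ t ≤ 2u` implies `φ'(t) ≤ 2^C φ'(u)`. -/
lemma phi'_double (hN : IsNFunction φ φ')
    (hd2 : ∀ t : ℝ, 0 < t → HasDerivAt φ' (φ'' t) t)
    (huc : UniformlyConvex φ' φ'' c C) (hc : 0 < c) (hcC : c ≤ C)
    {u t : ℝ} (hu : 0 < u) (ht0 : 0 ≤ t) (ht : t ≤ 2 * u) :
    φ' t ≤ 2 ^ C * φ' u := by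
  have hC : (0:ℝ) < C := hc.trans_le hcC
  have h2C : (1:ℝ) ≤ 2 ^ C := Real.one_le_rpow one_le_two hC.le
  rcases le_total t u with h | h
  · calc φ' t ≤ φ' u := phi'_mono hN ht0 h
      _ ≤ 2 ^ C * φ' u := le_mul_of_one_le_left (phi'_nonneg hN hu.le) h2C
  · calc φ' t ≤ (t / u) ^ C * φ' u := phi'_ratio_le hN hd2 huc hu h
      _ ≤ 2 ^ C * φ' u := by
          apply mul_le_mul_of_nonneg_right _ (phi'_nonneg hN hu.le)
          exact Real.rpow_le_rpow (by positivity) (by rw [div_le_iff₀ hu]; linarith) hC.le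

end Ratio

section Psi
variable {φ φ' φ'' : ℝ → ℝ} {c C : ℝ}

lemma psiDeriv_nonneg (t : ℝ) : 0 ≤ psiDeriv φ' t := Real.sqrt_nonneg _

lemma psiDeriv_zero : psiDeriv φ' 0 = 0 := by simp [psiDeriv]

lemma psiDeriv_sq (hN : IsNFunction φ φ') {t : ℝ} (ht : 0 ≤ t) :
    psiDeriv φ' t ^ 2 = t * φ' t :=
  Real.sq_sqrt (mul_nonneg ht (phi'_nonneg hN ht))

lemma psiDeriv_mono (hN : IsNFunction φ φ') {s t : ℝ} (hs : 0 ≤ s) (hst : s ≤ t) :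
    psiDeriv φ' s ≤ psiDeriv φ' t :=
  Real.sqrt_le_sqrt (mul_le_mul hst (phi'_mono hN hs hst) (phi'_nonneg hN hs) (hs.trans hst))

/-- `ψ'(t) ≤ (t/s)^((1+C)/2) ψ'(s)` for `0 < s ≤ t`. -/
lemma psi_ratio_le (hN : IsNFunction φ φ')
    (hd2 : ∀ t : ℝ, 0 < t → HasDerivAt φ' (φ'' t) t)
    (huc : UniformlyConvex φ' φ'' c C) {s t : ℝ} (hs : 0 < s) (hst : s ≤ t) :
    psiDeriv φ' t ≤ (t / s) ^ ((1 + C)/2) * psiDeriv φ' s := by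
  have ht : (0:ℝ) < t := hs.trans_le hst
  have hds : (0:ℝ) < t / s := div_pos ht hs
  have key : t * ((t / s) ^ C * φ' s) = ((t / s) ^ ((1 + C)/2)) ^ 2 * (s * φ' s) := by
    have e1 : ((t / s) ^ ((1 + C)/2)) ^ 2 = (t / s) * (t / s) ^ C := by
      rw [sq, ← Real.rpow_add hds]
      have : (1 + C)/2 + (1 + C)/2 = 1 + C := by ring
      rw [this, Real.rpow_add hds, Real.rpow_one]
    rw [e1]
    field_simp
  calc psiDeriv φ' t = Real.sqrt (t * φ' t) := rfl
    _ ≤ Real.sqrt (t * ((t / s) ^ C * φ' s)) := by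
        apply Real.sqrt_le_sqrt
        exact mul_le_mul_of_nonneg_left (phi'_ratio_le hN hd2 huc hs hst) ht.le
    _ = (t / s) ^ ((1 + C)/2) * psiDeriv φ' s := by
        rw [key, Real.sqrt_mul (sq_nonneg _), Real.sqrt_sq (Real.rpow_nonneg hds.le _)]
        rfl

/-- `(t/s)^((1+c)/2) ψ'(s) ≤ ψ'(t)` for `0 < s ≤ t`. -/
lemma psi_ratio_ge (hN : IsNFunction φ φ')
    (hd2 : ∀ t : ℝ, 0 < t → HasDerivAt φ' (φ'' t) t)
    (huc : UniformlyConvex φ' φ'' c C) {s t : ℝ} (hs : 0 < s) (hst : s ≤ t) :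
    (t / s) ^ ((1 + c)/2) * psiDeriv φ' s ≤ psiDeriv φ' t := by
  have ht : (0:ℝ) < t := hs.trans_le hst
  have hds : (0:ℝ) < t / s := div_pos ht hs
  have key : t * ((t / s) ^ c * φ' s) = ((t / s) ^ ((1 + c)/2)) ^ 2 * (s * φ' s) := by
    have e1 : ((t / s) ^ ((1 + c)/2)) ^ 2 = (t / s) * (t / s) ^ c := by
      rw [sq, ← Real.rpow_add hds]
      have : (1 + c)/2 + (1 + c)/2 = 1 + c := by ring
      rw [this, Real.rpow_add hds, Real.rpow_one]
    rw [e1]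
    field_simp
  calc (t / s) ^ ((1 + c)/2) * psiDeriv φ' s
      = Real.sqrt (t * ((t / s) ^ c * φ' s)) := by
        rw [key, Real.sqrt_mul (sq_nonneg _), Real.sqrt_sq (Real.rpow_nonneg hds.le _)]
        rfl
    _ ≤ Real.sqrt (t * φ' t) := by
        apply Real.sqrt_le_sqrt
        exact mul_le_mul_of_nonneg_left (phi'_ratio_ge hN hd2 huc hs hst) ht.le

/-- doubling for ψ': `0 < u`, `0 ≤ t ≤ 2u` implies `ψ'(t) ≤ 2^((1+C)/2) ψ'(u)`. -/
lemma psi_double (hN : IsNFunction φ φ')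
    (hd2 : ∀ t : ℝ, 0 < t → HasDerivAt φ' (φ'' t) t)
    (huc : UniformlyConvex φ' φ'' c C) (hc : 0 < c) (hcC : c ≤ C)
    {u t : ℝ} (hu : 0 < u) (ht0 : 0 ≤ t) (ht : t ≤ 2 * u) :
    psiDeriv φ' t ≤ 2 ^ ((1 + C)/2) * psiDeriv φ' u := by
  have hC : (0:ℝ) < C := hc.trans_le hcC
  have hβ : (0:ℝ) < (1 + C)/2 := by linarith
  have h2C : (1:ℝ) ≤ 2 ^ ((1 + C)/2) := Real.one_le_rpow one_le_two hβ.le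
  rcases le_total t u with h | h
  · calc psiDeriv φ' t ≤ psiDeriv φ' u := psiDeriv_mono hN ht0 h
      _ ≤ 2 ^ ((1 + C)/2) * psiDeriv φ' u :=
        le_mul_of_one_le_left (psiDeriv_nonneg _) h2C
  · calc psiDeriv φ' t ≤ (t / u) ^ ((1 + C)/2) * psiDeriv φ' u :=
        psi_ratio_le hN hd2 huc hu h
      _ ≤ 2 ^ ((1 + C)/2) * psiDeriv φ' u := by
          apply mul_le_mul_of_nonneg_right _ (psiDeriv_nonneg _)
          exact Real.rpow_le_rpow (by positivity) (by rw [div_le_iff₀ hu]; linarith) hβ.le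

end Psi

section GLemma
variable {φ φ' φ'' : ℝ → ℝ} {c C : ℝ}

lemma one_sub_rpow_ge {u α : ℝ} (h0 : 0 ≤ u) (h1 : u ≤ 1) (hα : 0 < α) :
    min α 1 * (1 - u) ≤ 1 - u ^ α := by
  rcases le_total α 1 with h | h
  · rw [min_eq_left h]
    have hg := Real.geom_mean_le_arith_mean2_weighted hα.le (by linarith : (0:ℝ) ≤ 1 - α)
      h0 zero_le_one (by ring)
    rw [Real.one_rpow, mul_one, mul_one] at hg
    linarith
  · rw [min_eq_right h]
    rcases eq_or_lt_of_le h0 with rfl | h0'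
    · rw [Real.zero_rpow hα.ne']; norm_num
    · have h2 : u ^ α ≤ u ^ (1:ℝ) := Real.rpow_le_rpow_of_exponent_ge h0' h1 h
      rw [Real.rpow_one] at h2
      linarith

lemma one_sub_rpow_le {u β : ℝ} (h0 : 0 ≤ u) (h1 : u ≤ 1) (hβ : 0 < β) :
    1 - u ^ β ≤ max β 1 * (1 - u) := by
  rcases le_total β 1 with h | h
  · rw [max_eq_right h]
    rcases eq_or_lt_of_le h0 with rfl | h0'
    · rw [Real.zero_rpow hβ.ne']; norm_num
    · have h2 : u ^ (1:ℝ) ≤ u ^ β := Real.rpow_le_rpow_of_exponent_ge h0' h1 h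
      rw [Real.rpow_one] at h2
      linarith
  · rw [max_eq_left h]
    have hber := one_add_mul_self_le_rpow_one_add (by linarith : (-1:ℝ) ≤ u - 1) h
    have h2 : (1 : ℝ) + (u - 1) = u := by ring
    rw [h2] at hber
    linarith

/-- the key difference estimate for `ψ'` on `0 ≤ η ≤ ξ`, `ξ > 0`. -/
lemma psi_diff (hN : IsNFunction φ φ')
    (hd2 : ∀ t : ℝ, 0 < t → HasDerivAt φ' (φ'' t) t)
    (huc : UniformlyConvex φ' φ'' c C) (hc : 0 < c) (hcC : c ≤ C)
    {η ξ : ℝ} (hη : 0 ≤ η) (hξ : η ≤ ξ) (h0 : 0 < ξ) :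
    min ((1 + c)/2) 1 * (psiDeriv φ' ξ * ((ξ - η)/ξ)) ≤ psiDeriv φ' ξ - psiDeriv φ' η ∧
    psiDeriv φ' ξ - psiDeriv φ' η ≤ max ((1 + C)/2) 1 * (psiDeriv φ' ξ * ((ξ - η)/ξ)) := by
  have hα : (0:ℝ) < (1 + c)/2 := by linarith
  have hβ : (0:ℝ) < (1 + C)/2 := by linarith
  set u : ℝ := η / ξ with hu
  have hu0 : 0 ≤ u := div_nonneg hη h0.le
  have hu1 : u ≤ 1 := by rw [hu, div_le_one h0]; exact hξ
  have hrw : (ξ - η)/ξ = 1 - u := by rw [hu]; field_simp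
  have hψ : 0 ≤ psiDeriv φ' ξ := psiDeriv_nonneg _
  have hub : psiDeriv φ' η ≤ psiDeriv φ' ξ * u ^ ((1 + c)/2) := by
    rcases eq_or_lt_of_le hη with rfl | hη'
    · rw [psiDeriv_zero]
      positivity
    · have h := psi_ratio_ge hN hd2 huc hη' hξ
      have hp : (0:ℝ) < (ξ / η) ^ ((1 + c)/2) :=
        Real.rpow_pos_of_pos (div_pos h0 hη') _
      have e1 : u ^ ((1 + c)/2) = ((ξ / η) ^ ((1 + c)/2))⁻¹ := by
        rw [hu, ← Real.inv_rpow (div_nonneg h0.le hη'.le), inv_div]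
      rw [e1, ← div_eq_mul_inv, le_div_iff₀ hp]
      nlinarith [h]
  have hlb : psiDeriv φ' ξ * u ^ ((1 + C)/2) ≤ psiDeriv φ' η := by
    rcases eq_or_lt_of_le hη with rfl | hη'
    · have : u = 0 := by rw [hu, zero_div]
      rw [this, Real.zero_rpow hβ.ne', mul_zero, psiDeriv_zero]
    · have h := psi_ratio_le hN hd2 huc hη' hξ
      have hp : (0:ℝ) < (ξ / η) ^ ((1 + C)/2) :=
        Real.rpow_pos_of_pos (div_pos h0 hη') _
      have e1 : u ^ ((1 + C)/2) = ((ξ / η) ^ ((1 + C)/2))⁻¹ := by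
        rw [hu, ← Real.inv_rpow (div_nonneg h0.le hη'.le), inv_div]
      rw [e1, ← div_eq_mul_inv, div_le_iff₀ hp]
      nlinarith [h]
  constructor
  · have h1 := one_sub_rpow_ge hu0 hu1 hα
    rw [hrw]
    calc min ((1 + c)/2) 1 * (psiDeriv φ' ξ * (1 - u))
        = psiDeriv φ' ξ * (min ((1 + c)/2) 1 * (1 - u)) := by ring
      _ ≤ psiDeriv φ' ξ * (1 - u ^ ((1 + c)/2)) := mul_le_mul_of_nonneg_left h1 hψ
      _ = psiDeriv φ' ξ - psiDeriv φ' ξ * u ^ ((1 + c)/2) := by ring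
      _ ≤ psiDeriv φ' ξ - psiDeriv φ' η := by linarith
  · have h1 := one_sub_rpow_le hu0 hu1 hβ
    rw [hrw]
    calc psiDeriv φ' ξ - psiDeriv φ' η
        ≤ psiDeriv φ' ξ - psiDeriv φ' ξ * u ^ ((1 + C)/2) := by linarith
      _ = psiDeriv φ' ξ * (1 - u ^ ((1 + C)/2)) := by ring
      _ ≤ psiDeriv φ' ξ * (max ((1 + C)/2) 1 * (1 - u)) := mul_le_mul_of_nonneg_left h1 hψ
      _ = max ((1 + C)/2) 1 * (psiDeriv φ' ξ * (1 - u)) := by ring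

end GLemma

section Shift
variable {φ φ' : ℝ → ℝ}

lemma shiftDeriv_nonneg (hN : IsNFunction φ φ') {a s : ℝ} (ha : 0 ≤ a) (hs : 0 ≤ s) :
    0 ≤ shiftDeriv φ' a s :=
  mul_nonneg (div_nonneg hs (by linarith)) (phi'_nonneg hN (by linarith))

lemma frac_mono {a s₁ s₂ : ℝ} (ha : 0 ≤ a) (h1 : 0 ≤ s₁) (h12 : s₁ ≤ s₂) :
    s₁ / (a + s₁) ≤ s₂ / (a + s₂) := by
  rcases eq_or_lt_of_le (h1.trans h12) with rfl | h2
  · have : s₁ = 0 := le_antisymm h12 h1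
    simp [this]
  · rcases eq_or_lt_of_le h1 with rfl | h1'
    · rw [zero_div]
      positivity
    · rw [div_le_div_iff₀ (by linarith) (by linarith)]
      nlinarith

lemma shiftDeriv_mono (hN : IsNFunction φ φ') {a : ℝ} (ha : 0 ≤ a) :
    MonotoneOn (shiftDeriv φ' a) (Set.Ici 0) := by
  intro s₁ h1 s₂ h2 h12
  simp only [Set.mem_Ici] at h1 h2
  unfold shiftDeriv
  apply mul_le_mul (frac_mono ha h1 h12)
    (phi'_mono hN (by linarith) (by linarith))
    (phi'_nonneg hN (by linarith))
    (div_nonneg h2 (by linarith))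

lemma shiftN_upper (hN : IsNFunction φ φ') {a t : ℝ} (ha : 0 ≤ a) (ht : 0 ≤ t) :
    shiftN φ' a t ≤ t * shiftDeriv φ' a t := by
  have hmono : MonotoneOn (shiftDeriv φ' a) (Set.uIcc 0 t) := by
    rw [Set.uIcc_of_le ht]
    exact (shiftDeriv_mono hN ha).mono Set.Icc_subset_Ici_self
  have hint : IntervalIntegrable (shiftDeriv φ' a) volume 0 t := hmono.intervalIntegrable
  have h := intervalIntegral.integral_mono_on ht hint intervalIntegrable_const
    (fun x hx => (shiftDeriv_mono hN ha) (Set.mem_Ici.2 hx.1)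
      (Set.mem_Ici.2 ht) hx.2 : ∀ x ∈ Set.Icc 0 t, shiftDeriv φ' a x ≤ shiftDeriv φ' a t)
  rw [intervalIntegral.integral_const, smul_eq_mul, sub_zero] at h
  exact h

lemma shiftN_lower (hN : IsNFunction φ φ') {a t : ℝ} (ha : 0 ≤ a) (ht : 0 ≤ t) :
    t/2 * shiftDeriv φ' a (t/2) ≤ shiftN φ' a t := by
  have h1 : (0:ℝ) ≤ t/2 := by linarith
  have h2 : t/2 ≤ t := by linarith
  have hmono1 : MonotoneOn (shiftDeriv φ' a) (Set.uIcc 0 (t/2)) := by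
    rw [Set.uIcc_of_le h1]
    exact (shiftDeriv_mono hN ha).mono Set.Icc_subset_Ici_self
  have hmono2 : MonotoneOn (shiftDeriv φ' a) (Set.uIcc (t/2) t) := by
    rw [Set.uIcc_of_le h2]
    exact (shiftDeriv_mono hN ha).mono (Set.Icc_subset_Ici_self.trans
      (Set.Ici_subset_Ici.2 h1))
  have hint1 : IntervalIntegrable (shiftDeriv φ' a) volume 0 (t/2) :=
    hmono1.intervalIntegrable
  have hint2 : IntervalIntegrable (shiftDeriv φ' a) volume (t/2) t :=
    hmono2.intervalIntegrable
  have hsplit : shiftN φ' a t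
      = (∫ s in (0:ℝ)..(t/2), shiftDeriv φ' a s) + ∫ s in (t/2:ℝ)..t, shiftDeriv φ' a s :=
    (intervalIntegral.integral_add_adjacent_intervals hint1 hint2).symm
  have hpos : 0 ≤ ∫ s in (0:ℝ)..(t/2), shiftDeriv φ' a s :=
    intervalIntegral.integral_nonneg h1 (fun u hu => shiftDeriv_nonneg hN ha hu.1)
  have hmid : t/2 * shiftDeriv φ' a (t/2) ≤ ∫ s in (t/2:ℝ)..t, shiftDeriv φ' a s := by
    have h := intervalIntegral.integral_mono_on h2 intervalIntegrable_const hint2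
      (fun x hx => (shiftDeriv_mono hN ha) (Set.mem_Ici.2 h1)
        (Set.mem_Ici.2 (h1.trans hx.1)) hx.1 : ∀ x ∈ Set.Icc (t/2) t,
        shiftDeriv φ' a (t/2) ≤ shiftDeriv φ' a x)
    rw [intervalIntegral.integral_const, smul_eq_mul] at h
    calc t/2 * shiftDeriv φ' a (t/2) = (t - t/2) * shiftDeriv φ' a (t/2) := by ring
      _ ≤ _ := h
  linarith

end Shift

section VofLemmas
variable {φ' : ℝ → ℝ}

lemma Vof_nonneg_eq {s : ℝ} (hs : 0 ≤ s) : Vof φ' s = psiDeriv φ' s := by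
  unfold Vof
  rcases eq_or_lt_of_le hs with rfl | h
  · simp [psiDeriv]
  · rw [if_neg h.ne', abs_of_pos h, mul_div_assoc, div_self h.ne', mul_one]

lemma Vof_neg (s : ℝ) : Vof φ' (-s) = - Vof φ' s := by
  unfold Vof
  rcases eq_or_ne s 0 with rfl | h
  · simp
  · rw [if_neg (neg_ne_zero.2 h), if_neg h, abs_neg]
    field_simp

end VofLemmas

/-! ### Constants -/

noncomputable def kQ2 (c C : ℝ) : ℝ :=
  min ((min ((1 + c)/2) 1) ^ 2 / (C * 2 ^ C)) ((2:ℝ) ^ (-(1 + C)) / C)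
noncomputable def KQ2 (c C : ℝ) : ℝ := max ((max ((1 + C)/2) 1) ^ 2 / (c/2)) (4/c)
noncomputable def kQ3 (C : ℝ) : ℝ := (2:ℝ) ^ (-(C + 2)) / (C * 2 ^ (C + 1))
noncomputable def KQ3 (c C : ℝ) : ℝ := 1 / (c * (2:ℝ) ^ (-(C + 1)))
noncomputable def kAll (c C : ℝ) : ℝ := min (min c (kQ2 c C)) (min (kQ3 C) 1)
noncomputable def KAll (c C : ℝ) : ℝ := max (max C (KQ2 c C)) (max (KQ3 c C) 1)

lemma kQ2_pos {c C : ℝ} (hc : 0 < c) (hcC : c ≤ C) : 0 < kQ2 c C := by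
  have hC : 0 < C := hc.trans_le hcC
  apply lt_min
  · apply div_pos
    · apply pow_pos
      exact lt_min (by linarith) one_pos
    · positivity
  · apply div_pos (by positivity) hC

lemma KQ2_pos {c C : ℝ} (hc : 0 < c) : 0 < KQ2 c C := by
  apply lt_max_of_lt_right
  positivity

lemma kQ3_pos {c C : ℝ} (hc : 0 < c) (hcC : c ≤ C) : 0 < kQ3 C := by
  have hC : 0 < C := hc.trans_le hcC
  unfold kQ3
  positivity

lemma KQ3_pos {c C : ℝ} (hc : 0 < c) : 0 < KQ3 c C := by
  unfold KQ3
  positivity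

lemma kAll_pos {c C : ℝ} (hc : 0 < c) (hcC : c ≤ C) : 0 < kAll c C :=
  lt_min (lt_min hc (kQ2_pos hc hcC)) (lt_min (kQ3_pos hc hcC) one_pos)

lemma kAll_le_one {c C : ℝ} : kAll c C ≤ 1 :=
  (min_le_right _ _).trans (min_le_right _ _)

lemma one_le_KAll {c C : ℝ} : 1 ≤ KAll c C :=
  (le_max_right _ _).trans (le_max_right _ _)

lemma KAll_pos {c C : ℝ} : 0 < KAll c C := lt_of_lt_of_le one_pos one_le_KAll

/-- transfer comparability through an intermediate quantity. -/
lemma comp_trans {p1 p2 q1 q2 Z X Y : ℝ} (hp1 : 0 < p1) (hp2 : 0 < p2)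
    (hq1 : 0 < q1) (hq2 : 0 < q2)
    (hx1 : p1 * Z ≤ X) (hx2 : X ≤ p2 * Z) (hy1 : q1 * Z ≤ Y) (hy2 : Y ≤ q2 * Z) :
    p1/q2 * Y ≤ X ∧ X ≤ p2/q1 * Y := by
  constructor
  · have h1 : Y/q2 ≤ Z := by rw [div_le_iff₀ hq2]; nlinarith
    calc p1/q2*Y = p1*(Y/q2) := by ring
      _ ≤ p1*Z := mul_le_mul_of_nonneg_left h1 hp1.le
      _ ≤ X := hx1
  · have h1 : Z ≤ Y/q1 := by rw [le_div_iff₀ hq1]; nlinarith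
    calc X ≤ p2*Z := hx2
      _ ≤ p2*(Y/q1) := mul_le_mul_of_nonneg_left h1 hp2.le
      _ = p2/q1*Y := by ring

lemma rpow_neg_mul_self (x : ℝ) : (2:ℝ) ^ (-x) * 2 ^ x = 1 := by
  rw [← Real.rpow_add two_pos]
  simp

section Quants
variable {φ φ' φ'' A : ℝ → ℝ} {c C : ℝ}

lemma abs_sub_le_abs_add_abs (x y : ℝ) : |x - y| ≤ |x| + |y| := by
  calc |x - y| = |x + -y| := by rw [sub_eq_add_neg]
    _ ≤ |x| + |-y| := abs_add_le _ _
    _ = |x| + |y| := by rw [abs_neg]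

lemma phi''_nonneg (hN : IsNFunction φ φ') (huc : UniformlyConvex φ' φ'' c C)
    (hc : 0 < c) {t : ℝ} (ht : 0 < t) : 0 ≤ φ'' t := by
  have h1 := (huc t ht).1
  have h2 := hN.deriv_pos t ht
  nlinarith

lemma quant4_nonneg (hN : IsNFunction φ φ') (huc : UniformlyConvex φ' φ'' c C)
    (hc : 0 < c) (ξ η : ℝ) : 0 ≤ φ'' (|ξ| + |η|) * (ξ - η) ^ 2 := by
  rcases eq_or_ne ξ η with rfl | hne
  · simp
  · have ht : 0 < |ξ - η| := abs_pos.2 (sub_ne_zero.2 hne)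
    have hm : 0 < |ξ| + |η| := lt_of_lt_of_le ht (abs_sub_le_abs_add_abs ξ η)
    exact mul_nonneg (phi''_nonneg hN huc hc hm) (sq_nonneg _)

/-- bounds for quantity 1 (the `A`-form). -/
lemma quant1_bounds (hog : OrthotropicGrowth φ'' A c C) (ξ η : ℝ) :
    c * (φ'' (|ξ| + |η|) * (ξ - η) ^ 2) ≤ (A ξ - A η) * (ξ - η) ∧
    (A ξ - A η) * (ξ - η) ≤ C * (φ'' (|ξ| + |η|) * (ξ - η) ^ 2) := by
  obtain ⟨h1, h2⟩ := hog ξ η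
  have habs : |ξ - η| ^ 2 = (ξ - η) ^ 2 := sq_abs _
  constructor
  · rw [← habs]
    exact h1
  · calc (A ξ - A η) * (ξ - η) ≤ |(A ξ - A η) * (ξ - η)| := le_abs_self _
      _ = |A ξ - A η| * |ξ - η| := abs_mul _ _
      _ ≤ (C * (φ'' (|ξ| + |η|) * |ξ - η|)) * |ξ - η| :=
          mul_le_mul_of_nonneg_right h2 (abs_nonneg _)
      _ = C * (φ'' (|ξ| + |η|) * (ξ - η) ^ 2) := by rw [← habs]; ring

/-- bounds for quantity 3 (the shifted N-function form). -/
lemma quant3_bounds (hN : IsNFunction φ φ')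
    (hd2 : ∀ t : ℝ, 0 < t → HasDerivAt φ' (φ'' t) t)
    (huc : UniformlyConvex φ' φ'' c C) (hc : 0 < c) (hcC : c ≤ C) (ξ η : ℝ) :
    kQ3 C * (φ'' (|ξ| + |η|) * (ξ - η) ^ 2) ≤ shiftN φ' |ξ| |ξ - η| ∧
    shiftN φ' |ξ| |ξ - η| ≤ KQ3 c C * (φ'' (|ξ| + |η|) * (ξ - η) ^ 2) := by
  have hC : 0 < C := hc.trans_le hcC
  rcases eq_or_ne ξ η with rfl | hne
  · simp [shiftN, intervalIntegral.integral_same]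
  set a := |ξ| with ha_def
  set t := |ξ - η| with ht_def
  set m := |ξ| + |η| with hm_def
  have ha : 0 ≤ a := abs_nonneg _
  have ht : 0 < t := abs_pos.2 (sub_ne_zero.2 hne)
  have htm : t ≤ m := abs_sub_le_abs_add_abs ξ η
  have hm : 0 < m := ht.trans_le htm
  have hr : 0 < a + t := by positivity
  have hηr : |η| ≤ a + t := by
    calc |η| = |ξ - (ξ - η)| := by congr 1; ring
      _ ≤ |ξ| + |ξ - η| := abs_sub_le_abs_add_abs _ _
  have hm2r : m ≤ 2 * (a + t) := by
    rw [hm_def]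
    linarith
  have hr2m : a + t ≤ 2 * m := by
    have h1 : a ≤ m := by rw [hm_def, ha_def]; linarith [abs_nonneg η]
    linarith
  -- doubling facts
  have hAr : φ' (a + t) ≤ 2 ^ C * φ' m := phi'_double hN hd2 huc hc hcC hm hr.le hr2m
  have hAm : φ' m ≤ 2 ^ C * φ' (a + t) := phi'_double hN hd2 huc hc hcC hr hm.le hm2r
  have hr2 : 0 < a + t/2 := by positivity
  have hAr' : φ' (a + t) ≤ 2 ^ C * φ' (a + t/2) :=
    phi'_double hN hd2 huc hc hcC hr2 hr.le (by linarith)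
  obtain ⟨hU1, hU2⟩ := huc m hm
  have hq : 0 ≤ φ'' m := phi''_nonneg hN huc hc hm
  have h2C : (0:ℝ) < 2 ^ C := Real.rpow_pos_of_pos two_pos C
  have h2C1 : (0:ℝ) < 2 ^ (C + 1) := Real.rpow_pos_of_pos two_pos (C + 1)
  have e2 : (2:ℝ) ^ (C + 1) = 2 ^ C * 2 := by
    rw [Real.rpow_add two_pos, Real.rpow_one]
  have hφr : 0 ≤ φ' (a + t) := phi'_nonneg hN hr.le
  have hφm : 0 ≤ φ' m := phi'_nonneg hN hm.le
  -- key products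
  have key : c * φ' (a + t) ≤ 2 ^ (C + 1) * ((a + t) * φ'' m) := by
    have h1 : c * φ' (a + t) ≤ c * (2 ^ C * φ' m) :=
      mul_le_mul_of_nonneg_left hAr hc.le
    have h2 : (2:ℝ) ^ C * (c * φ' m) ≤ 2 ^ C * (m * φ'' m) :=
      mul_le_mul_of_nonneg_left hU1 h2C.le
    have h3 : (2:ℝ) ^ C * (m * φ'' m) ≤ 2 ^ C * (2 * (a + t) * φ'' m) :=
      mul_le_mul_of_nonneg_left (mul_le_mul_of_nonneg_right hm2r hq) h2C.le
    rw [e2]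
    nlinarith [h1, h2, h3]
  have key3 : φ'' m * (a + t) ≤ C * 2 ^ (C + 1) * φ' (a + t) := by
    have h1 : (a + t) * φ'' m ≤ 2 * m * φ'' m :=
      mul_le_mul_of_nonneg_right hr2m hq
    have h2 : (2:ℝ) * (m * φ'' m) ≤ 2 * (C * φ' m) :=
      mul_le_mul_of_nonneg_left hU2 (by norm_num)
    have h3 : (2:ℝ) * C * φ' m ≤ 2 * C * (2 ^ C * φ' (a + t)) :=
      mul_le_mul_of_nonneg_left hAm (by positivity)
    rw [e2]
    nlinarith [h1, h2, h3]
  -- the intermediate quantity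
  set Z : ℝ := t ^ 2 * (φ' (a + t) / (a + t)) with hZ
  have core_q1 : c * 2 ^ (-(C + 1)) * (φ' (a + t) / (a + t)) ≤ φ'' m := by
    have h : c * φ' (a + t) / 2 ^ (C + 1) / (a + t) ≤ φ'' m := by
      rw [div_le_iff₀ hr, div_le_iff₀ h2C1]
      linarith [key]
    calc c * 2 ^ (-(C + 1)) * (φ' (a + t) / (a + t))
        = c * φ' (a + t) / 2 ^ (C + 1) / (a + t) := by
          rw [Real.rpow_neg two_pos.le]; ring
      _ ≤ φ'' m := h
  have core_q2 : φ'' m ≤ C * 2 ^ (C + 1) * (φ' (a + t) / (a + t)) := by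
    have e : C * 2 ^ (C + 1) * (φ' (a + t) / (a + t))
        = (C * 2 ^ (C + 1) * φ' (a + t)) / (a + t) := by ring
    rw [e, le_div_iff₀ hr]
    linarith [key3]

  have hy1 : (c * 2 ^ (-(C + 1))) * Z ≤ φ'' m * t ^ 2 := by
    calc (c * 2 ^ (-(C + 1))) * Z
        = (c * 2 ^ (-(C + 1)) * (φ' (a + t) / (a + t))) * t ^ 2 := by rw [hZ]; ring
      _ ≤ φ'' m * t ^ 2 := mul_le_mul_of_nonneg_right core_q1 (sq_nonneg t)
  have hy2 : φ'' m * t ^ 2 ≤ (C * 2 ^ (C + 1)) * Z := by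
    calc φ'' m * t ^ 2 ≤ (C * 2 ^ (C + 1) * (φ' (a + t) / (a + t))) * t ^ 2 :=
          mul_le_mul_of_nonneg_right core_q2 (sq_nonneg t)
      _ = (C * 2 ^ (C + 1)) * Z := by rw [hZ]; ring
  -- bounds for shiftN
  have hx2 : shiftN φ' a t ≤ 1 * Z := by
    calc shiftN φ' a t ≤ t * shiftDeriv φ' a t := shiftN_upper hN ha ht.le
      _ = 1 * Z := by rw [hZ]; unfold shiftDeriv; ring
  have hx1 : (2:ℝ) ^ (-(C + 2)) * Z ≤ shiftN φ' a t := by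
    have hlow := shiftN_lower hN ha ht.le
    have h1 : (t/2)/(a + t) ≤ (t/2)/(a + t/2) := by
      gcongr
      linarith
    have h2 : 2 ^ (-C) * φ' (a + t) ≤ φ' (a + t/2) := by
      calc (2:ℝ) ^ (-C) * φ' (a + t) ≤ 2 ^ (-C) * (2 ^ C * φ' (a + t/2)) :=
            mul_le_mul_of_nonneg_left hAr' (Real.rpow_nonneg two_pos.le _)
        _ = φ' (a + t/2) := by rw [← mul_assoc, rpow_neg_mul_self, one_mul]
    have h3 : (t/2)/(a + t) * (2 ^ (-C) * φ' (a + t)) ≤ shiftDeriv φ' a (t/2) := by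
      unfold shiftDeriv
      apply mul_le_mul h1 h2 (by positivity) (by positivity)
    have h4 : t/2 * ((t/2)/(a + t) * (2 ^ (-C) * φ' (a + t))) ≤ t/2 * shiftDeriv φ' a (t/2) :=
      mul_le_mul_of_nonneg_left h3 (by positivity)
    have e : t/2 * ((t/2)/(a + t) * (2 ^ (-C) * φ' (a + t))) = (2:ℝ) ^ (-(C + 2)) * Z := by
      have e4 : (2:ℝ) ^ (-(C + 2)) = 2 ^ (-C) / 4 := by
        rw [show -(C + 2) = -C + (-2) by ring, Real.rpow_add two_pos]
        have h22 : (2:ℝ) ^ ((-2):ℝ) = 1/4 := by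
          rw [Real.rpow_neg two_pos.le, show ((2:ℝ):ℝ) = ((2:ℕ):ℝ) by norm_num,
            Real.rpow_natCast]
          norm_num
        rw [h22]
        ring
      rw [e4, hZ]
      ring
    linarith [h4, e ▸ h4]
  have hcomp := comp_trans (Real.rpow_pos_of_pos two_pos (-(C + 2))) one_pos
    (by positivity : (0:ℝ) < c * 2 ^ (-(C + 1))) (by positivity : (0:ℝ) < C * 2 ^ (C + 1))
    hx1 hx2 hy1 hy2
  unfold kQ3 KQ3
  rw [← sq_abs (ξ - η)]
  exact hcomp

end Quants

section Quant2
variable {φ φ' φ'' : ℝ → ℝ} {c C : ℝ}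

/-- same-sign case: `0 ≤ η ≤ ξ`, `η ≠ ξ`. -/
lemma quant2_ss (hN : IsNFunction φ φ')
    (hd2 : ∀ t : ℝ, 0 < t → HasDerivAt φ' (φ'' t) t)
    (huc : UniformlyConvex φ' φ'' c C) (hc : 0 < c) (hcC : c ≤ C)
    {η ξ : ℝ} (hη : 0 ≤ η) (hξ : η ≤ ξ) (hne : η ≠ ξ) :
    kQ2 c C * (φ'' (ξ + η) * (ξ - η) ^ 2) ≤ (psiDeriv φ' ξ - psiDeriv φ' η) ^ 2 ∧
    (psiDeriv φ' ξ - psiDeriv φ' η) ^ 2 ≤ KQ2 c C * (φ'' (ξ + η) * (ξ - η) ^ 2) := by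
  have hC : 0 < C := hc.trans_le hcC
  have hlt : η < ξ := lt_of_le_of_ne hξ hne
  have hξ0 : 0 < ξ := lt_of_le_of_lt hη hlt
  have hm : 0 < ξ + η := by linarith
  obtain ⟨hU1, hU2⟩ := huc (ξ + η) hm
  have hq : 0 ≤ φ'' (ξ + η) := phi''_nonneg hN huc hc hm
  have h2C : (0:ℝ) < 2 ^ C := Real.rpow_pos_of_pos two_pos C
  have hφξ : 0 ≤ φ' ξ := phi'_nonneg hN hξ0.le
  have hφm : 0 ≤ φ' (ξ + η) := phi'_nonneg hN hm.le
  have hmono : φ' ξ ≤ φ' (ξ + η) := phi'_mono hN hξ0.le (by linarith)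
  have hAm : φ' (ξ + η) ≤ 2 ^ C * φ' ξ :=
    phi'_double hN hd2 huc hc hcC hξ0 hm.le (by linarith)
  -- difference bounds
  obtain ⟨hD1, hD2⟩ := psi_diff hN hd2 huc hc hcC hη hξ hξ0
  have hDnn : 0 ≤ psiDeriv φ' ξ - psiDeriv φ' η :=
    sub_nonneg.2 (psiDeriv_mono hN hη hξ)
  set B : ℝ := psiDeriv φ' ξ * ((ξ - η)/ξ) with hB
  have hBnn : 0 ≤ B :=
    mul_nonneg (psiDeriv_nonneg _) (div_nonneg (by linarith) hξ0.le)
  set κ₁ : ℝ := min ((1 + c)/2) 1 with hκ₁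
  set κ₂ : ℝ := max ((1 + C)/2) 1 with hκ₂
  have hκ₁p : 0 < κ₁ := lt_min (by linarith) one_pos
  have hκ₂p : 0 < κ₂ := lt_of_lt_of_le one_pos (le_max_right _ _)
  set Z : ℝ := φ' ξ / ξ * (ξ - η) ^ 2 with hZ
  have hBsq : B ^ 2 = Z := by
    rw [hB, hZ, mul_pow, psiDeriv_sq hN hξ0.le, div_pow]
    field_simp
  have hx1 : κ₁ ^ 2 * Z ≤ (psiDeriv φ' ξ - psiDeriv φ' η) ^ 2 := by
    have h := pow_le_pow_left₀ (mul_nonneg hκ₁p.le hBnn) hD1 2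
    rw [mul_pow, hBsq] at h
    exact h
  have hx2 : (psiDeriv φ' ξ - psiDeriv φ' η) ^ 2 ≤ κ₂ ^ 2 * Z := by
    have h := pow_le_pow_left₀ hDnn hD2 2
    rw [mul_pow, hBsq] at h
    exact h
  -- Q4 vs Z
  have core_q1 : c/2 * (φ' ξ / ξ) ≤ φ'' (ξ + η) := by
    have e : c/2 * (φ' ξ / ξ) = c * φ' ξ / (2 * ξ) := by ring
    rw [e, div_le_iff₀ (by positivity)]
    have h1 : c * φ' ξ ≤ c * φ' (ξ + η) := mul_le_mul_of_nonneg_left hmono hc.le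
    have h2 : (ξ + η) * φ'' (ξ + η) ≤ 2 * ξ * φ'' (ξ + η) :=
      mul_le_mul_of_nonneg_right (by linarith) hq
    linarith
  have core_q2 : φ'' (ξ + η) ≤ C * 2 ^ C * (φ' ξ / ξ) := by
    have e : C * 2 ^ C * (φ' ξ / ξ) = C * 2 ^ C * φ' ξ / ξ := by ring
    rw [e, le_div_iff₀ hξ0]
    have h1 : ξ * φ'' (ξ + η) ≤ (ξ + η) * φ'' (ξ + η) :=
      mul_le_mul_of_nonneg_right (by linarith) hq
    have h2 : C * φ' (ξ + η) ≤ C * (2 ^ C * φ' ξ) := mul_le_mul_of_nonneg_left hAm hC.le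
    linarith
  have hy1 : (c/2) * Z ≤ φ'' (ξ + η) * (ξ - η) ^ 2 := by
    calc (c/2) * Z = (c/2 * (φ' ξ / ξ)) * (ξ - η) ^ 2 := by rw [hZ]; ring
      _ ≤ φ'' (ξ + η) * (ξ - η) ^ 2 := mul_le_mul_of_nonneg_right core_q1 (sq_nonneg _)
  have hy2 : φ'' (ξ + η) * (ξ - η) ^ 2 ≤ (C * 2 ^ C) * Z := by
    calc φ'' (ξ + η) * (ξ - η) ^ 2 ≤ (C * 2 ^ C * (φ' ξ / ξ)) * (ξ - η) ^ 2 :=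
          mul_le_mul_of_nonneg_right core_q2 (sq_nonneg _)
      _ = (C * 2 ^ C) * Z := by rw [hZ]; ring
  have hcomp := comp_trans (pow_pos hκ₁p 2) (pow_pos hκ₂p 2)
    (by positivity : (0:ℝ) < c/2) (by positivity : (0:ℝ) < C * 2 ^ C)
    hx1 hx2 hy1 hy2
  have hQ4nn : 0 ≤ φ'' (ξ + η) * (ξ - η) ^ 2 := mul_nonneg hq (sq_nonneg _)
  constructor
  · calc kQ2 c C * (φ'' (ξ + η) * (ξ - η) ^ 2)
        ≤ κ₁ ^ 2 / (C * 2 ^ C) * (φ'' (ξ + η) * (ξ - η) ^ 2) :=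
          mul_le_mul_of_nonneg_right (min_le_left _ _) hQ4nn
      _ ≤ (psiDeriv φ' ξ - psiDeriv φ' η) ^ 2 := hcomp.1
  · calc (psiDeriv φ' ξ - psiDeriv φ' η) ^ 2
        ≤ κ₂ ^ 2 / (c/2) * (φ'' (ξ + η) * (ξ - η) ^ 2) := hcomp.2
      _ ≤ KQ2 c C * (φ'' (ξ + η) * (ξ - η) ^ 2) :=
          mul_le_mul_of_nonneg_right (le_max_left _ _) hQ4nn

/-- mixed-sign case, stated for `a, b ≥ 0` not both `0`. -/
lemma quant2_mix (hN : IsNFunction φ φ')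
    (hd2 : ∀ t : ℝ, 0 < t → HasDerivAt φ' (φ'' t) t)
    (huc : UniformlyConvex φ' φ'' c C) (hc : 0 < c) (hcC : c ≤ C)
    {a b : ℝ} (ha : 0 ≤ a) (hb : 0 ≤ b) (hm : 0 < a + b) :
    kQ2 c C * (φ'' (a + b) * (a + b) ^ 2) ≤ (psiDeriv φ' a + psiDeriv φ' b) ^ 2 ∧
    (psiDeriv φ' a + psiDeriv φ' b) ^ 2 ≤ KQ2 c C * (φ'' (a + b) * (a + b) ^ 2) := by
  have hC : 0 < C := hc.trans_le hcC
  obtain ⟨hU1, hU2⟩ := huc (a + b) hm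
  have hq : 0 ≤ φ'' (a + b) := phi''_nonneg hN huc hc hm
  have hφm : 0 ≤ φ' (a + b) := phi'_nonneg hN hm.le
  have hSnn : 0 ≤ psiDeriv φ' a + psiDeriv φ' b :=
    add_nonneg (psiDeriv_nonneg _) (psiDeriv_nonneg _)
  set Z : ℝ := (a + b) * φ' (a + b) with hZ
  have hψsq : psiDeriv φ' (a + b) ^ 2 = Z := psiDeriv_sq hN hm.le
  have hβpos : (0:ℝ) < 2 ^ ((1 + C)/2) := Real.rpow_pos_of_pos two_pos _
  -- upper: S ≤ 2 ψ'(a+b)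
  have hS2 : psiDeriv φ' a + psiDeriv φ' b ≤ 2 * psiDeriv φ' (a + b) := by
    have h1 : psiDeriv φ' a ≤ psiDeriv φ' (a + b) := psiDeriv_mono hN ha (by linarith)
    have h2 : psiDeriv φ' b ≤ psiDeriv φ' (a + b) := psiDeriv_mono hN hb (by linarith)
    linarith
  have hx2 : (psiDeriv φ' a + psiDeriv φ' b) ^ 2 ≤ 4 * Z := by
    have h := pow_le_pow_left₀ hSnn hS2 2
    rw [mul_pow, hψsq] at h
    linarith [h]
  -- lower: ψ'(a+b) ≤ 2^β S
  have hψm : psiDeriv φ' (a + b) ≤ 2 ^ ((1 + C)/2) * (psiDeriv φ' a + psiDeriv φ' b) := by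
    rcases le_total a b with hab | hab
    · have hb0 : 0 < b := by linarith
      have h := psi_double hN hd2 huc hc hcC hb0 hm.le (by linarith)
      have h2 : (2:ℝ) ^ ((1 + C)/2) * psiDeriv φ' b
          ≤ 2 ^ ((1 + C)/2) * (psiDeriv φ' a + psiDeriv φ' b) :=
        mul_le_mul_of_nonneg_left (by linarith [psiDeriv_nonneg (φ' := φ') a]) hβpos.le
      linarith
    · have ha0 : 0 < a := by linarith
      have h := psi_double hN hd2 huc hc hcC ha0 hm.le (by linarith)
      have h2 : (2:ℝ) ^ ((1 + C)/2) * psiDeriv φ' a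
          ≤ 2 ^ ((1 + C)/2) * (psiDeriv φ' a + psiDeriv φ' b) :=
        mul_le_mul_of_nonneg_left (by linarith [psiDeriv_nonneg (φ' := φ') b]) hβpos.le
      linarith
  have hx1 : (2:ℝ) ^ (-(1 + C)) * Z ≤ (psiDeriv φ' a + psiDeriv φ' b) ^ 2 := by
    have h := pow_le_pow_left₀ (psiDeriv_nonneg _) hψm 2
    rw [mul_pow, hψsq] at h
    have e : ((2:ℝ) ^ ((1 + C)/2)) ^ 2 = 2 ^ (1 + C) := by
      rw [sq, ← Real.rpow_add two_pos]
      congr 1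
      ring
    rw [e] at h
    calc (2:ℝ) ^ (-(1 + C)) * Z
        ≤ 2 ^ (-(1 + C)) * (2 ^ (1 + C) * (psiDeriv φ' a + psiDeriv φ' b) ^ 2) :=
          mul_le_mul_of_nonneg_left h (Real.rpow_nonneg two_pos.le _)
      _ = (psiDeriv φ' a + psiDeriv φ' b) ^ 2 := by
          rw [← mul_assoc, rpow_neg_mul_self, one_mul]
  -- Q4 vs Z
  have hy1 : c * Z ≤ φ'' (a + b) * (a + b) ^ 2 := by
    have h := mul_le_mul_of_nonneg_left hU1 hm.le
    calc c * Z = (a + b) * (c * φ' (a + b)) := by rw [hZ]; ring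
      _ ≤ (a + b) * ((a + b) * φ'' (a + b)) := h
      _ = φ'' (a + b) * (a + b) ^ 2 := by ring
  have hy2 : φ'' (a + b) * (a + b) ^ 2 ≤ C * Z := by
    have h := mul_le_mul_of_nonneg_left hU2 hm.le
    calc φ'' (a + b) * (a + b) ^ 2 = (a + b) * ((a + b) * φ'' (a + b)) := by ring
      _ ≤ (a + b) * (C * φ' (a + b)) := h
      _ = C * Z := by rw [hZ]; ring
  have hcomp := comp_trans (Real.rpow_pos_of_pos two_pos (-(1 + C))) (by norm_num : (0:ℝ) < 4)
    hc hC hx1 hx2 hy1 hy2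
  have hQ4nn : 0 ≤ φ'' (a + b) * (a + b) ^ 2 := mul_nonneg hq (sq_nonneg _)
  constructor
  · calc kQ2 c C * (φ'' (a + b) * (a + b) ^ 2)
        ≤ 2 ^ (-(1 + C)) / C * (φ'' (a + b) * (a + b) ^ 2) :=
          mul_le_mul_of_nonneg_right (min_le_right _ _) hQ4nn
      _ ≤ (psiDeriv φ' a + psiDeriv φ' b) ^ 2 := hcomp.1
  · calc (psiDeriv φ' a + psiDeriv φ' b) ^ 2
        ≤ 4 / c * (φ'' (a + b) * (a + b) ^ 2) := hcomp.2
      _ ≤ KQ2 c C * (φ'' (a + b) * (a + b) ^ 2) :=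
          mul_le_mul_of_nonneg_right (le_max_right _ _) hQ4nn

end Quant2

section Quant2Full
variable {φ φ' φ'' : ℝ → ℝ} {c C : ℝ}

lemma Vof_nonpos_eq {s : ℝ} (hs : s ≤ 0) : Vof φ' s = -psiDeriv φ' (-s) := by
  have h := Vof_neg (φ' := φ') (-s)
  rw [neg_neg] at h
  rw [h, Vof_nonneg_eq (neg_nonneg.2 hs)]

/-- bounds for quantity 2 (the `V`-form). -/
lemma quant2_bounds (hN : IsNFunction φ φ')
    (hd2 : ∀ t : ℝ, 0 < t → HasDerivAt φ' (φ'' t) t)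
    (huc : UniformlyConvex φ' φ'' c C) (hc : 0 < c) (hcC : c ≤ C) (ξ η : ℝ) :
    kQ2 c C * (φ'' (|ξ| + |η|) * (ξ - η) ^ 2) ≤ (Vof φ' ξ - Vof φ' η) ^ 2 ∧
    (Vof φ' ξ - Vof φ' η) ^ 2 ≤ KQ2 c C * (φ'' (|ξ| + |η|) * (ξ - η) ^ 2) := by
  rcases eq_or_ne ξ η with rfl | hne
  · simp
  have hmix : ∀ x y : ℝ, 0 ≤ x → y ≤ 0 → x ≠ y →
      kQ2 c C * (φ'' (|x| + |y|) * (x - y) ^ 2) ≤ (Vof φ' x - Vof φ' y) ^ 2 ∧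
      (Vof φ' x - Vof φ' y) ^ 2 ≤ KQ2 c C * (φ'' (|x| + |y|) * (x - y) ^ 2) := by
    intro x y hx hy hxy
    have hm : 0 < x + -y := by
      rcases lt_or_eq_of_le (by linarith : (0:ℝ) ≤ x + -y) with h | h
      · exact h
      · exfalso
        have hx0 : x = 0 := by linarith
        have hy0 : y = 0 := by linarith
        exact hxy (by rw [hx0, hy0])
    have e1 : |x| = x := abs_of_nonneg hx
    have e2 : |y| = -y := abs_of_nonpos hy
    have e3 : Vof φ' x - Vof φ' y = psiDeriv φ' x + psiDeriv φ' (-y) := by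
      rw [Vof_nonneg_eq hx, Vof_nonpos_eq hy]
      ring
    have e4 : (x - y) ^ 2 = (x + -y) ^ 2 := by ring
    rw [e1, e2, e3, e4]
    exact quant2_mix hN hd2 huc hc hcC hx (by linarith) hm
  have hpair : ∀ x y : ℝ, 0 ≤ x → 0 ≤ y → x ≠ y →
      kQ2 c C * (φ'' (|x| + |y|) * (x - y) ^ 2) ≤ (Vof φ' x - Vof φ' y) ^ 2 ∧
      (Vof φ' x - Vof φ' y) ^ 2 ≤ KQ2 c C * (φ'' (|x| + |y|) * (x - y) ^ 2) := by
    intro x y hx hy hxy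
    rw [abs_of_nonneg hx, abs_of_nonneg hy, Vof_nonneg_eq hx, Vof_nonneg_eq hy]
    rcases le_total y x with h | h
    · exact quant2_ss hN hd2 huc hc hcC hy h (fun hh => hxy hh.symm)
    · have hres := quant2_ss hN hd2 huc hc hcC hx h hxy
      have e1 : (psiDeriv φ' x - psiDeriv φ' y) ^ 2 = (psiDeriv φ' y - psiDeriv φ' x) ^ 2 := by
        ring
      have e2 : (x - y) ^ 2 = (y - x) ^ 2 := by ring
      have e3 : x + y = y + x := add_comm _ _
      rw [e1, e2, e3]
      exact hres
  rcases le_total 0 ξ with hξ | hξ <;> rcases le_total 0 η with hη | hη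
  · exact hpair ξ η hξ hη hne
  · exact hmix ξ η hξ hη hne
  · have hres := hmix η ξ hη hξ (Ne.symm hne)
    have e1 : (Vof φ' ξ - Vof φ' η) ^ 2 = (Vof φ' η - Vof φ' ξ) ^ 2 := by ring
    have e2 : (ξ - η) ^ 2 = (η - ξ) ^ 2 := by ring
    have e3 : |ξ| + |η| = |η| + |ξ| := add_comm _ _
    rw [e1, e2, e3]
    exact hres
  · have hres := hpair (-ξ) (-η) (by linarith) (by linarith) (fun hh => hne (by linarith))
    have e1 : (Vof φ' ξ - Vof φ' η) ^ 2 = (Vof φ' (-ξ) - Vof φ' (-η)) ^ 2 := by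
      rw [Vof_neg, Vof_neg]
      ring
    have e2 : (ξ - η) ^ 2 = (-ξ - -η) ^ 2 := by ring
    have e3 : |ξ| + |η| = |-ξ| + |-η| := by rw [abs_neg, abs_neg]
    rw [e1, e2, e3]
    exact hres

end Quant2Full

lemma kAll_le_c {c C : ℝ} : kAll c C ≤ c := (min_le_left _ _).trans (min_le_left _ _)
lemma kAll_le_kQ2 {c C : ℝ} : kAll c C ≤ kQ2 c C := (min_le_left _ _).trans (min_le_right _ _)
lemma kAll_le_kQ3 {c C : ℝ} : kAll c C ≤ kQ3 C := (min_le_right _ _).trans (min_le_left _ _)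
lemma C_le_KAll {c C : ℝ} : C ≤ KAll c C := (le_max_left _ _).trans (le_max_left _ _)
lemma KQ2_le_KAll {c C : ℝ} : KQ2 c C ≤ KAll c C := (le_max_right _ _).trans (le_max_left _ _)
lemma KQ3_le_KAll {c C : ℝ} : KQ3 c C ≤ KAll c C := (le_max_left _ _).trans (le_max_right _ _)

end Stmt0Aux

open Stmt0Aux

/-- Proposition "equivalences": under the orthotropic growth and
uniform convexity assumptions, the four quantities are pairwise comparable with
constants `c', C'` depending only on `c, C, D`. -/
theorem statement0 (c C D : ℝ) (hc : 0 < c) (hcC : c ≤ C) (hD : 0 < D) :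
    ∃ c' C' : ℝ, 0 < c' ∧ c' ≤ C' ∧
      ∀ (d : ℕ) (φ φ' φ'' A : Fin d → ℝ → ℝ),
        (∀ i, IsNFunction (φ i) (φ' i)) →
        (∀ i, ContDiffOn ℝ 2 (φ i) (Set.Ioi 0)) →
        (∀ i, ∀ t : ℝ, 0 < t → HasDerivAt (φ i) (φ' i t) t) →
        (∀ i, ∀ t : ℝ, 0 < t → HasDerivAt (φ' i) (φ'' i t) t) →
        (∀ i, Delta2 (φ i) D) →
        (∀ i, UniformlyConvex (φ' i) (φ'' i) c C) →
        (∀ i, Continuous (A i)) → (∀ i, A i 0 = 0) →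
        (∀ i, OrthotropicGrowth (φ'' i) (A i) c C) →
        ∀ (ξ η : Fin d → ℝ) (j k : Fin 4),
          c' * quantQ d φ' φ'' A ξ η j ≤ quantQ d φ' φ'' A ξ η k ∧
          quantQ d φ' φ'' A ξ η k ≤ C' * quantQ d φ' φ'' A ξ η j := by
  have hk0 : 0 < kAll c C := kAll_pos hc hcC
  have hK0 : 0 < KAll c C := KAll_pos
  have hkK : kAll c C ≤ KAll c C := kAll_le_one.trans one_le_KAll
  refine ⟨kAll c C / KAll c C, KAll c C / kAll c C, div_pos hk0 hK0, ?_, ?_⟩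
  · calc kAll c C / KAll c C ≤ 1 := (div_le_one hK0).2 hkK
      _ ≤ KAll c C / kAll c C := (one_le_div hk0).2 hkK
  intro d φ φ' φ'' A hN hC2 hd1 hd2 hΔ huc hAc hA0 hog ξ η j k
  set S4 : ℝ := ∑ i, φ'' i (|ξ i| + |η i|) * (ξ i - η i) ^ 2 with hS4
  have hq4 : ∀ i, 0 ≤ φ'' i (|ξ i| + |η i|) * (ξ i - η i) ^ 2 :=
    fun i => quant4_nonneg (hN i) (huc i) hc (ξ i) (η i)
  have hkey : ∀ j : Fin 4, kAll c C * S4 ≤ quantQ d φ' φ'' A ξ η j ∧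
      quantQ d φ' φ'' A ξ η j ≤ KAll c C * S4 := by
    have hQ0 : kAll c C * S4 ≤ (∑ i, (A i (ξ i) - A i (η i)) * (ξ i - η i)) ∧
        (∑ i, (A i (ξ i) - A i (η i)) * (ξ i - η i)) ≤ KAll c C * S4 := by
      constructor
      · rw [hS4, Finset.mul_sum]
        apply Finset.sum_le_sum
        intro i _
        calc kAll c C * (φ'' i (|ξ i| + |η i|) * (ξ i - η i) ^ 2)
            ≤ c * (φ'' i (|ξ i| + |η i|) * (ξ i - η i) ^ 2) :=
              mul_le_mul_of_nonneg_right kAll_le_c (hq4 i)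
          _ ≤ _ := (quant1_bounds (hog i) (ξ i) (η i)).1
      · rw [hS4, Finset.mul_sum]
        apply Finset.sum_le_sum
        intro i _
        calc (A i (ξ i) - A i (η i)) * (ξ i - η i)
            ≤ C * (φ'' i (|ξ i| + |η i|) * (ξ i - η i) ^ 2) :=
              (quant1_bounds (hog i) (ξ i) (η i)).2
          _ ≤ KAll c C * (φ'' i (|ξ i| + |η i|) * (ξ i - η i) ^ 2) :=
              mul_le_mul_of_nonneg_right C_le_KAll (hq4 i)
    have hQ1 : kAll c C * S4 ≤ (∑ i, (Vof (φ' i) (ξ i) - Vof (φ' i) (η i)) ^ 2) ∧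
        (∑ i, (Vof (φ' i) (ξ i) - Vof (φ' i) (η i)) ^ 2) ≤ KAll c C * S4 := by
      constructor
      · rw [hS4, Finset.mul_sum]
        apply Finset.sum_le_sum
        intro i _
        calc kAll c C * (φ'' i (|ξ i| + |η i|) * (ξ i - η i) ^ 2)
            ≤ kQ2 c C * (φ'' i (|ξ i| + |η i|) * (ξ i - η i) ^ 2) :=
              mul_le_mul_of_nonneg_right kAll_le_kQ2 (hq4 i)
          _ ≤ _ := (quant2_bounds (hN i) (hd2 i) (huc i) hc hcC (ξ i) (η i)).1
      · rw [hS4, Finset.mul_sum]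
        apply Finset.sum_le_sum
        intro i _
        calc (Vof (φ' i) (ξ i) - Vof (φ' i) (η i)) ^ 2
            ≤ KQ2 c C * (φ'' i (|ξ i| + |η i|) * (ξ i - η i) ^ 2) :=
              (quant2_bounds (hN i) (hd2 i) (huc i) hc hcC (ξ i) (η i)).2
          _ ≤ KAll c C * (φ'' i (|ξ i| + |η i|) * (ξ i - η i) ^ 2) :=
              mul_le_mul_of_nonneg_right KQ2_le_KAll (hq4 i)
    have hQ2 : kAll c C * S4 ≤ (∑ i, shiftN (φ' i) |ξ i| |ξ i - η i|) ∧
        (∑ i, shiftN (φ' i) |ξ i| |ξ i - η i|) ≤ KAll c C * S4 := by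
      constructor
      · rw [hS4, Finset.mul_sum]
        apply Finset.sum_le_sum
        intro i _
        calc kAll c C * (φ'' i (|ξ i| + |η i|) * (ξ i - η i) ^ 2)
            ≤ kQ3 C * (φ'' i (|ξ i| + |η i|) * (ξ i - η i) ^ 2) :=
              mul_le_mul_of_nonneg_right kAll_le_kQ3 (hq4 i)
          _ ≤ _ := (quant3_bounds (hN i) (hd2 i) (huc i) hc hcC (ξ i) (η i)).1
      · rw [hS4, Finset.mul_sum]
        apply Finset.sum_le_sum
        intro i _
        calc shiftN (φ' i) |ξ i| |ξ i - η i|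
            ≤ KQ3 c C * (φ'' i (|ξ i| + |η i|) * (ξ i - η i) ^ 2) :=
              (quant3_bounds (hN i) (hd2 i) (huc i) hc hcC (ξ i) (η i)).2
          _ ≤ KAll c C * (φ'' i (|ξ i| + |η i|) * (ξ i - η i) ^ 2) :=
              mul_le_mul_of_nonneg_right KQ3_le_KAll (hq4 i)
    have hS4nn : 0 ≤ S4 := Finset.sum_nonneg (fun i _ => hq4 i)
    have hQ3 : kAll c C * S4 ≤ S4 ∧ S4 ≤ KAll c C * S4 := by
      constructor
      · calc kAll c C * S4 ≤ 1 * S4 := mul_le_mul_of_nonneg_right kAll_le_one hS4nn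
          _ = S4 := one_mul _
      · calc S4 = 1 * S4 := (one_mul _).symm
          _ ≤ KAll c C * S4 := mul_le_mul_of_nonneg_right one_le_KAll hS4nn
    intro j
    fin_cases j
    · simpa [quantQ] using hQ0
    · simpa [quantQ] using hQ1
    · simpa [quantQ] using hQ2
    · simpa [quantQ, ← hS4] using hQ3
  obtain ⟨hj1, hj2⟩ := hkey j
  obtain ⟨hk1, hk2⟩ := hkey k
  exact comp_trans hk0 hK0 hk0 hK0 hk1 hk2 hj1 hj2
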